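/- Let χ(y) = C'(1+|y|)^{-α/2} with C' > 0, and suppose 0 ≤ a(y) ≤ C(1+|y|)^{-α} for some C > 0 and α > 2d. Then with c = ∫(1+|y|)^{α/2} a(y) dy − ∫ a(y) dy, one has Aχ ≤ cχ pointwise, and consequently e^{tA} χ ≤ e^{ct} χ for all t ≥ 0. -/

import Mathlib

open MeasureTheory

/-- The one particle operator (Af)(x) = ∫ a(x-y)(f(y)-f(x)) dy. -/
noncomputable def Aop {d : ℕ} (a f : EuclideanSpace ℝ (Fin d) → ℝ)
    (x : EuclideanSpace ℝ (Fin d)) : ℝ :=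
  ∫ y, a (x - y) * (f y - f x)

/-- Iterates Aⁿ of the one particle operator. -/
noncomputable def Apow {d : ℕ} (a : EuclideanSpace ℝ (Fin d) → ℝ) :
    ℕ → (EuclideanSpace ℝ (Fin d) → ℝ) → (EuclideanSpace ℝ (Fin d) → ℝ)
  | 0, f => f
  | n + 1, f => Aop a (Apow a n f)

/-- The semigroup e^{tA} given by its exponential series, pointwise. -/
noncomputable def expA {d : ℕ} (a : EuclideanSpace ℝ (Fin d) → ℝ) (t : ℝ)
    (f : EuclideanSpace ℝ (Fin d) → ℝ) (x : EuclideanSpace ℝ (Fin d)) : ℝ :=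
  ∑' n : ℕ, t ^ n / n.factorial * Apow a n f x

/- ---------------- Auxiliary development ---------------- -/

/-- Iterated convolution with the kernel `a`, starting from `χ`. -/
noncomputable def Kit {d : ℕ} (a χ : EuclideanSpace ℝ (Fin d) → ℝ) :
    ℕ → EuclideanSpace ℝ (Fin d) → ℝ
  | 0 => χ
  | k+1 => fun x => ∫ y, a (x - y) * Kit a χ k y

theorem aux_int (d : ℕ) (a : EuclideanSpace ℝ (Fin d) → ℝ) (C α : ℝ)
    (hα : 2 * (d : ℝ) < α) (hmeas : Measurable a)
    (ha : ∀ y, 0 ≤ a y ∧ a y ≤ C / (1 + ‖y‖) ^ α) :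
    Integrable a ∧ Integrable (fun y => (1 + ‖y‖) ^ (α / 2) * a y) := by
  have hbase : ∀ y : EuclideanSpace ℝ (Fin d), (0:ℝ) < 1 + ‖y‖ := fun y => by positivity
  have hd : (d : ℝ) < α := by have : (0:ℝ) ≤ d := Nat.cast_nonneg d; linarith
  have hd2 : (d : ℝ) < α / 2 := by linarith
  have h1 : Integrable (fun y : EuclideanSpace ℝ (Fin d) => ((1:ℝ) + ‖y‖) ^ (-α)) := by
    apply integrable_one_add_norm (μ := volume); rw [finrank_euclideanSpace_fin]; exact hd
  have h2 : Integrable (fun y : EuclideanSpace ℝ (Fin d) => ((1:ℝ) + ‖y‖) ^ (-(α/2))) := by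
    apply integrable_one_add_norm (μ := volume); rw [finrank_euclideanSpace_fin]; exact hd2
  have hwmeas : Measurable (fun y : EuclideanSpace ℝ (Fin d) => ((1:ℝ) + ‖y‖) ^ (α/2)) := by
    apply Continuous.measurable
    exact (continuous_const.add continuous_norm).rpow_const fun y => Or.inl (ne_of_gt (hbase y))
  constructor
  · refine (h1.const_mul C).mono' hmeas.aestronglyMeasurable (ae_of_all _ fun y => ?_)
    rw [Real.norm_eq_abs, abs_of_nonneg (ha y).1, Real.rpow_neg (hbase y).le]
    calc a y ≤ C / (1 + ‖y‖) ^ α := (ha y).2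
    _ = C * ((1 + ‖y‖) ^ α)⁻¹ := by ring
  · refine (h2.const_mul C).mono' (hwmeas.mul hmeas).aestronglyMeasurable
      (ae_of_all _ fun y => ?_)
    have hw0 : (0:ℝ) ≤ (1 + ‖y‖) ^ (α/2) := Real.rpow_nonneg (hbase y).le _
    rw [Real.norm_eq_abs, abs_of_nonneg (mul_nonneg hw0 (ha y).1)]
    calc (1 + ‖y‖) ^ (α/2) * a y ≤ (1 + ‖y‖) ^ (α/2) * (C / (1 + ‖y‖) ^ α) :=
        mul_le_mul_of_nonneg_left (ha y).2 hw0
    _ = C * ((1 + ‖y‖) ^ (α/2) * ((1 + ‖y‖) ^ α)⁻¹) := by ring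
    _ = C * (1 + ‖y‖) ^ (-(α/2)) := by
        rw [← Real.rpow_neg (hbase y).le α, ← Real.rpow_add (hbase y)]
        ring_nf

theorem chi_key (d : ℕ) (C' α : ℝ) (hC' : 0 < C') (hα : 0 ≤ α)
    (x y : EuclideanSpace ℝ (Fin d)) :
    C' * (1 + ‖y‖) ^ (-(α / 2)) ≤ (1 + ‖x - y‖) ^ (α / 2) * (C' * (1 + ‖x‖) ^ (-(α / 2))) := by
  have hx : (0:ℝ) < 1 + ‖x‖ := by positivity
  have hy : (0:ℝ) < 1 + ‖y‖ := by positivity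
  have hxy : (0:ℝ) < 1 + ‖x - y‖ := by positivity
  have htri : 1 + ‖x‖ ≤ (1 + ‖y‖) * (1 + ‖x - y‖) := by
    have h := norm_add_le y (x - y)
    rw [add_sub_cancel] at h
    nlinarith [norm_nonneg y, norm_nonneg (x - y)]
  have hP : (1 + ‖x‖) ^ (α/2) ≤ (1 + ‖y‖) ^ (α/2) * (1 + ‖x - y‖) ^ (α/2) := by
    rw [← Real.mul_rpow hy.le hxy.le]
    exact Real.rpow_le_rpow hx.le htri (by linarith)
  have hPpos : (0:ℝ) < (1 + ‖x‖) ^ (α/2) := Real.rpow_pos_of_pos hx _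
  have hQpos : (0:ℝ) < (1 + ‖y‖) ^ (α/2) := Real.rpow_pos_of_pos hy _
  have hRpos : (0:ℝ) < (1 + ‖x - y‖) ^ (α/2) := Real.rpow_pos_of_pos hxy _
  rw [Real.rpow_neg hy.le, Real.rpow_neg hx.le]
  rw [show C' * ((1 + ‖y‖) ^ (α/2))⁻¹ = C' / (1 + ‖y‖) ^ (α/2) by ring,
    show (1 + ‖x - y‖) ^ (α/2) * (C' * ((1 + ‖x‖) ^ (α/2))⁻¹)
      = ((1 + ‖x - y‖) ^ (α/2) * C') / (1 + ‖x‖) ^ (α/2) by ring,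
    div_le_div_iff₀ hQpos hPpos]
  nlinarith

theorem kit_props (d : ℕ) (a χ : EuclideanSpace ℝ (Fin d) → ℝ) (C C' α : ℝ)
    (hα : 2 * (d : ℝ) < α) (hmeas : Measurable a)
    (ha : ∀ y, 0 ≤ a y ∧ a y ≤ C / (1 + ‖y‖) ^ α)
    (hχm : Measurable χ) (hχ0 : ∀ y, 0 ≤ χ y) (hχC : ∀ y, χ y ≤ C')
    (hkey : ∀ x y, χ y ≤ (1 + ‖x - y‖) ^ (α / 2) * χ x) :
    ∀ k, Measurable (Kit a χ k) ∧ ∀ x, 0 ≤ Kit a χ k x ∧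
      Kit a χ k x ≤ (∫ y, (1 + ‖y‖) ^ (α / 2) * a y) ^ k * χ x := by
  obtain ⟨hInta, hIntw⟩ := aux_int d a C α hα hmeas ha
  set b := ∫ y, (1 + ‖y‖) ^ (α / 2) * a y with hb
  have hbase : ∀ y : EuclideanSpace ℝ (Fin d), (0:ℝ) < 1 + ‖y‖ := fun y => by positivity
  have hb0 : 0 ≤ b := integral_nonneg fun y =>
    mul_nonneg (Real.rpow_nonneg (hbase y).le _) (ha y).1
  intro k
  induction k with
  | zero =>
    refine ⟨by simpa [Kit] using hχm, fun x => ?_⟩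
    simpa [Kit] using hχ0 x
  | succ k ih =>
    obtain ⟨ihm, ihb⟩ := ih
    have hIk : ∀ x, Integrable (fun y => a (x - y) * Kit a χ k y) := by
      intro x
      refine ((hInta.comp_sub_left x).const_mul (b ^ k * C')).mono'
        ((hmeas.comp (measurable_const.sub measurable_id)).mul ihm).aestronglyMeasurable
        (ae_of_all _ fun y => ?_)
      have h1 : 0 ≤ a (x - y) := (ha _).1
      have h2 : 0 ≤ Kit a χ k y := (ihb y).1
      rw [Real.norm_eq_abs, abs_of_nonneg (mul_nonneg h1 h2)]
      have h3 : Kit a χ k y ≤ b ^ k * C' :=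
        (ihb y).2.trans (mul_le_mul_of_nonneg_left (hχC y) (pow_nonneg hb0 k))
      calc a (x - y) * Kit a χ k y ≤ a (x - y) * (b ^ k * C') :=
            mul_le_mul_of_nonneg_left h3 h1
      _ = b ^ k * C' * a (x - y) := by ring
    constructor
    · show Measurable fun x => ∫ y, a (x - y) * Kit a χ k y
      have : Measurable fun p : (EuclideanSpace ℝ (Fin d)) × (EuclideanSpace ℝ (Fin d)) =>
          a (p.1 - p.2) * Kit a χ k p.2 :=
        (hmeas.comp (measurable_fst.sub measurable_snd)).mul (ihm.comp measurable_snd)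
      exact this.stronglyMeasurable.integral_prod_right'.measurable
    · intro x
      constructor
      · exact integral_nonneg fun y => mul_nonneg (ha _).1 (ihb y).1
      · show (∫ y, a (x - y) * Kit a χ k y) ≤ b ^ (k+1) * χ x
        have hpoint : ∀ y, a (x - y) * Kit a χ k y ≤
            (b ^ k * χ x) * ((1 + ‖x - y‖) ^ (α / 2) * a (x - y)) := by
          intro y
          have h1 : Kit a χ k y ≤ b ^ k * ((1 + ‖x - y‖) ^ (α / 2) * χ x) :=
            (ihb y).2.trans (mul_le_mul_of_nonneg_left (hkey x y) (pow_nonneg hb0 k))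
          calc a (x - y) * Kit a χ k y
              ≤ a (x - y) * (b ^ k * ((1 + ‖x - y‖) ^ (α / 2) * χ x)) :=
                mul_le_mul_of_nonneg_left h1 (ha _).1
          _ = (b ^ k * χ x) * ((1 + ‖x - y‖) ^ (α / 2) * a (x - y)) := by ring
        have hIw : Integrable (fun y => (b ^ k * χ x) *
            ((1 + ‖x - y‖) ^ (α / 2) * a (x - y))) :=
          (hIntw.comp_sub_left x).const_mul _
        calc (∫ y, a (x - y) * Kit a χ k y)
            ≤ ∫ y, (b ^ k * χ x) * ((1 + ‖x - y‖) ^ (α / 2) * a (x - y)) :=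
              integral_mono (hIk x) hIw hpoint
        _ = (b ^ k * χ x) * ∫ y, (1 + ‖x - y‖) ^ (α / 2) * a (x - y) := integral_const_mul _ _
        _ = (b ^ k * χ x) * b := by
              rw [integral_sub_left_eq_self (fun z => (1 + ‖z‖) ^ (α / 2) * a z) volume x]
        _ = b ^ (k+1) * χ x := by ring

theorem kit_int (d : ℕ) (a χ : EuclideanSpace ℝ (Fin d) → ℝ) (C' : ℝ) (k : ℕ)
    (hInta : Integrable a) (ha0 : ∀ y, 0 ≤ a y)
    (hkm : Measurable (Kit a χ k))
    (hk0 : ∀ y, 0 ≤ Kit a χ k y) (hkC : ∀ y, Kit a χ k y ≤ C')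
    (hmeas : Measurable a) (x : EuclideanSpace ℝ (Fin d)) :
    Integrable (fun y => a (x - y) * Kit a χ k y) := by
  refine ((hInta.comp_sub_left x).const_mul C').mono'
    ((hmeas.comp (measurable_const.sub measurable_id)).mul hkm).aestronglyMeasurable
    (ae_of_all _ fun y => ?_)
  rw [Real.norm_eq_abs, abs_of_nonneg (mul_nonneg (ha0 _) (hk0 y))]
  calc a (x - y) * Kit a χ k y ≤ a (x - y) * C' :=
        mul_le_mul_of_nonneg_left (hkC y) (ha0 _)
  _ = C' * a (x - y) := by ring

theorem aop_eq' (d : ℕ) (a f : EuclideanSpace ℝ (Fin d) → ℝ)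
    (hInta : Integrable a) (x : EuclideanSpace ℝ (Fin d))
    (hf : Integrable (fun y => a (x - y) * f y)) :
    Aop a f x = (∫ y, a (x - y) * f y) - (∫ y, a y) * f x := by
  have h2 : Integrable (fun y => a (x - y) * f x) := (hInta.comp_sub_left x).mul_const _
  have h3 : Aop a f x = ∫ y, (a (x - y) * f y - a (x - y) * f x) := by
    unfold Aop; congr 1; funext y; ring
  rw [h3, integral_sub hf h2, integral_mul_const, integral_sub_left_eq_self a volume x]

open Finset in
theorem binom_step (m : ℝ) (K : ℕ → ℝ) (n : ℕ) :
    (∑ k ∈ range (n+1), (n.choose k : ℝ) * (-m)^(n-k) * K (k+1))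
      - m * ∑ k ∈ range (n+1), (n.choose k : ℝ) * (-m)^(n-k) * K k
    = ∑ k ∈ range (n+2), ((n+1).choose k : ℝ) * (-m)^(n+1-k) * K k := by
  rw [Finset.sum_range_succ' (fun k => (((n+1).choose k : ℝ)) * (-m)^(n+1-k) * K k) (n+1)]
  simp only [Nat.succ_sub_succ_eq_sub, Nat.choose_zero_right, Nat.cast_one, one_mul,
    Nat.sub_zero]
  have h1 : ∀ i ∈ range (n+1), (((n+1).choose (i+1) : ℝ)) * (-m)^(n - i) * K (i+1)
      = (n.choose i : ℝ) * (-m)^(n-i) * K (i+1) + (n.choose (i+1) : ℝ) * (-m)^(n-i) * K (i+1) := by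
    intro i _; rw [Nat.choose_succ_succ]; push_cast; ring
  rw [Finset.sum_congr rfl h1, Finset.sum_add_distrib]
  have h2 : -(m * ∑ k ∈ range (n+1), (n.choose k : ℝ) * (-m)^(n-k) * K k)
      = (∑ i ∈ range (n+1), (n.choose (i+1) : ℝ) * (-m)^(n-i) * K (i+1))
        + (-m)^(n+1) * K 0 := by
    have e1 : -(m * ∑ k ∈ range (n+1), (n.choose k : ℝ) * (-m)^(n-k) * K k)
        = ∑ k ∈ range (n+1), (n.choose k : ℝ) * (-m)^(n-k+1) * K k := by
      rw [Finset.mul_sum, ← Finset.sum_neg_distrib]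
      exact Finset.sum_congr rfl fun k hk => by rw [pow_succ]; ring
    rw [e1, Finset.sum_range_succ' (fun k => (n.choose k : ℝ) * (-m)^(n-k+1) * K k) n]
    simp only [Nat.choose_zero_right, Nat.cast_one, one_mul, Nat.sub_zero]
    rw [Finset.sum_range_succ (fun i => (n.choose (i+1) : ℝ) * (-m)^(n-i) * K (i+1)) n]
    simp only [Nat.choose_succ_self, Nat.cast_zero, zero_mul, add_zero]
    congr 1
    refine Finset.sum_congr rfl fun i hi => ?_
    have hin : i < n := Finset.mem_range.mp hi
    have h3 : n - (i+1) + 1 = n - i := by omega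
    rw [h3]
  linarith [h2]

open Finset in
theorem apow_binom (d : ℕ) (a χ : EuclideanSpace ℝ (Fin d) → ℝ)
    (hInta : Integrable a)
    (hIk : ∀ (k : ℕ) x, Integrable (fun y => a (x - y) * Kit a χ k y)) :
    ∀ (n : ℕ) x, Apow a n χ x = ∑ k ∈ range (n+1),
      (n.choose k : ℝ) * (-(∫ y, a y))^(n-k) * Kit a χ k x := by
  intro n
  induction n with
  | zero => intro x; simp [Apow, Kit]
  | succ n ih =>
    intro x
    have hfn : Apow a n χ = fun z => ∑ k ∈ range (n+1),
        (n.choose k : ℝ) * (-(∫ y, a y))^(n-k) * Kit a χ k z := funext ih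
    have hrw : ∀ x, (fun y => a (x - y) * ∑ k ∈ range (n+1),
          (n.choose k : ℝ) * (-(∫ y, a y))^(n-k) * Kit a χ k y)
        = fun y => ∑ k ∈ range (n+1),
          (n.choose k : ℝ) * (-(∫ y, a y))^(n-k) * (a (x - y) * Kit a χ k y) := by
      intro x; funext y; rw [Finset.mul_sum]
      exact Finset.sum_congr rfl fun k _ => by ring
    have hsum_int : Integrable (fun y => a (x - y) * ∑ k ∈ range (n+1),
        (n.choose k : ℝ) * (-(∫ y, a y))^(n-k) * Kit a χ k y) := by
      rw [hrw x]
      exact integrable_finset_sum _ fun k _ => (hIk k x).const_mul _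
    have step1 : Apow a (n+1) χ x
        = (∫ y, a (x - y) * ∑ k ∈ range (n+1),
            (n.choose k : ℝ) * (-(∫ y, a y))^(n-k) * Kit a χ k y)
          - (∫ y, a y) * ∑ k ∈ range (n+1),
            (n.choose k : ℝ) * (-(∫ y, a y))^(n-k) * Kit a χ k x := by
      show Aop a (Apow a n χ) x = _
      rw [hfn]
      exact aop_eq' d a _ hInta x hsum_int
    have step2 : (∫ y, a (x - y) * ∑ k ∈ range (n+1),
          (n.choose k : ℝ) * (-(∫ y, a y))^(n-k) * Kit a χ k y)
        = ∑ k ∈ range (n+1),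
          (n.choose k : ℝ) * (-(∫ y, a y))^(n-k) * Kit a χ (k+1) x := by
      rw [hrw x, integral_finset_sum _ fun k _ => (hIk k x).const_mul _]
      exact Finset.sum_congr rfl fun k _ => by rw [integral_const_mul]; rfl
    rw [step1, step2]
    exact binom_step (∫ y, a y) (fun k => Kit a χ k x) n

theorem main_meas (d : ℕ) (a : EuclideanSpace ℝ (Fin d) → ℝ) (C C' α : ℝ)
    (hC' : 0 < C') (hC : 0 < C) (hα : 2 * (d : ℝ) < α)
    (hmeas : Measurable a)
    (ha : ∀ y, 0 ≤ a y ∧ a y ≤ C / (1 + ‖y‖) ^ α)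
    (χ : EuclideanSpace ℝ (Fin d) → ℝ)
    (hχ : χ = fun y => C' * (1 + ‖y‖) ^ (-(α / 2)))
    (c : ℝ) (hc : c = (∫ y, (1 + ‖y‖) ^ (α / 2) * a y) - ∫ y, a y) :
    (∀ x, Aop a χ x ≤ c * χ x) ∧
    ∀ t : ℝ, 0 ≤ t → ∀ x, expA a t χ x ≤ Real.exp (c * t) * χ x := by
  obtain ⟨hInta, hIntw⟩ := aux_int d a C α hα hmeas ha
  have hbase : ∀ y : EuclideanSpace ℝ (Fin d), (0:ℝ) < 1 + ‖y‖ := fun y => by positivity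
  have hα0 : (0:ℝ) ≤ α := by have : (0:ℝ) ≤ (d:ℝ) := Nat.cast_nonneg d; linarith
  have hχm : Measurable χ := by
    rw [hχ]
    exact (continuous_const.mul ((continuous_const.add continuous_norm).rpow_const
      fun y => Or.inl (ne_of_gt (hbase y)))).measurable
  have hχ0 : ∀ y, 0 ≤ χ y := by intro y; rw [hχ]; positivity
  have hχC : ∀ y, χ y ≤ C' := by
    intro y; rw [hχ]; simp only
    have h1 : (1 + ‖y‖) ^ (-(α/2)) ≤ 1 :=
      Real.rpow_le_one_of_one_le_of_nonpos (by linarith [norm_nonneg y]) (by linarith)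
    nlinarith
  have hkey : ∀ x y, χ y ≤ (1 + ‖x - y‖) ^ (α / 2) * χ x := by
    intro x y; simp only [hχ]; exact chi_key d C' α hC' hα0 x y
  have hkp := kit_props d a χ C C' α hα hmeas ha hχm hχ0 hχC hkey
  have hb0 : 0 ≤ ∫ y, (1 + ‖y‖) ^ (α / 2) * a y := integral_nonneg fun y =>
    mul_nonneg (Real.rpow_nonneg (hbase y).le _) (ha y).1
  have hm0 : 0 ≤ ∫ y, a y := integral_nonneg fun y => (ha y).1
  set b := ∫ y, (1 + ‖y‖) ^ (α / 2) * a y with hbdef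
  set m := ∫ y, a y with hmdef
  have hkC' : ∀ (k : ℕ) y, Kit a χ k y ≤ b ^ k * C' := fun k y =>
    ((hkp k).2 y).2.trans (mul_le_mul_of_nonneg_left (hχC y) (pow_nonneg hb0 k))
  have hIk : ∀ (k : ℕ) x, Integrable (fun y => a (x - y) * Kit a χ k y) := fun k x =>
    kit_int d a χ (b ^ k * C') k hInta (fun y => (ha y).1) (hkp k).1
      (fun y => ((hkp k).2 y).1) (hkC' k) hmeas x
  have claim1 : ∀ x, Aop a χ x ≤ c * χ x := by
    intro x
    have h0 : Aop a χ x = (∫ y, a (x - y) * χ y) - m * χ x :=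
      aop_eq' d a χ hInta x (hIk 0 x)
    have h1 : (∫ y, a (x - y) * χ y) ≤ b * χ x := by
      have h2 := ((hkp 1).2 x).2
      simpa [Kit, pow_one] using h2
    rw [h0, hc]
    have := h1; nlinarith [h1]
  refine ⟨claim1, ?_⟩
  intro t ht x
  set f : ℕ → ℝ := fun k => t^k / k.factorial * Kit a χ k x with hfdef
  set g : ℕ → ℝ := fun j => (-(m*t))^j / j.factorial with hgdef
  have hexp : ∀ u : ℝ, Real.exp u = ∑' n : ℕ, u^n / n.factorial := fun u => by
    rw [Real.exp_eq_exp_ℝ, NormedSpace.exp_eq_tsum_div]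
  have hfle : ∀ k, f k ≤ (t*b)^k / k.factorial * χ x := by
    intro k
    have h1 : Kit a χ k x ≤ b^k * χ x := ((hkp k).2 x).2
    have h2 : (0:ℝ) ≤ t^k / k.factorial := by positivity
    calc f k ≤ t^k / k.factorial * (b^k * χ x) := mul_le_mul_of_nonneg_left h1 h2
    _ = (t*b)^k / k.factorial * χ x := by rw [mul_pow]; ring
  have hf0 : ∀ k, 0 ≤ f k := fun k =>
    mul_nonneg (by positivity) ((hkp k).2 x).1
  have hSsum : Summable (fun k => (t*b)^k / (k.factorial:ℝ) * χ x) :=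
    (Real.summable_pow_div_factorial (t*b)).mul_right _
  have hfnorm : Summable (fun k => ‖f k‖) := by
    refine Summable.of_nonneg_of_le (fun k => norm_nonneg _) (fun k => ?_) hSsum
    rw [Real.norm_eq_abs, abs_of_nonneg (hf0 k)]; exact hfle k
  have hgnorm : Summable (fun j => ‖g j‖) := by
    refine Summable.of_nonneg_of_le (fun j => norm_nonneg _) (fun j => ?_)
      (Real.summable_pow_div_factorial (m*t))
    show |(-(m*t))^j / (j.factorial:ℝ)| ≤ (m*t)^j / (j.factorial:ℝ)
    rw [abs_div, abs_pow, abs_neg, abs_of_nonneg (mul_nonneg hm0 ht), Nat.abs_cast]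
  have hterm : ∀ n : ℕ, t^n / n.factorial * Apow a n χ x
      = ∑ kl ∈ Finset.HasAntidiagonal.antidiagonal n, f kl.1 * g kl.2 := by
    intro n
    rw [apow_binom d a χ hInta hIk n x,
      Finset.Nat.sum_antidiagonal_eq_sum_range_succ_mk, Finset.mul_sum]
    refine Finset.sum_congr rfl fun k hk => ?_
    have hk' : k ≤ n := Nat.lt_succ_iff.mp (Finset.mem_range.mp hk)
    show t^n / n.factorial * ((n.choose k : ℝ) * (-m)^(n-k) * Kit a χ k x)
      = (t^k / k.factorial * Kit a χ k x) * ((-(m*t))^(n-k) / ((n-k).factorial:ℝ))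
    rw [Nat.cast_choose ℝ hk']
    have hfac1 : ((n.factorial:ℝ)) ≠ 0 := Nat.cast_ne_zero.mpr n.factorial_ne_zero
    have hfac2 : ((k.factorial:ℝ)) ≠ 0 := Nat.cast_ne_zero.mpr k.factorial_ne_zero
    have hfac3 : (((n-k).factorial:ℝ)) ≠ 0 := Nat.cast_ne_zero.mpr (n-k).factorial_ne_zero
    have ht1 : t^n = t^k * t^(n-k) := by rw [← pow_add]; congr 1; omega
    have ht2 : (-(m*t))^(n-k) = (-m)^(n-k) * t^(n-k) := by
      rw [show -(m*t) = (-m)*t by ring, mul_pow]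
    rw [ht2, ht1]
    field_simp
  have hmain : expA a t χ x = (∑' k, f k) * (∑' j, g j) := by
    have e0 : expA a t χ x = ∑' n : ℕ, t^n / n.factorial * Apow a n χ x := rfl
    rw [e0, tsum_congr hterm]
    exact (tsum_mul_tsum_eq_tsum_sum_antidiagonal_of_summable_norm hfnorm hgnorm).symm
  have hgsum : (∑' j, g j) = Real.exp (-(m*t)) := by rw [hexp (-(m*t))]
  have hfsum_le : (∑' k, f k) ≤ Real.exp (t*b) * χ x := by
    have h1 : (∑' k : ℕ, (t*b)^k / (k.factorial:ℝ) * χ x) = Real.exp (t*b) * χ x := by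
      rw [tsum_mul_right, ← hexp]
    rw [← h1]
    exact Summable.tsum_le_tsum hfle hfnorm.of_norm hSsum
  rw [hmain, hgsum]
  calc (∑' k, f k) * Real.exp (-(m*t))
      ≤ (Real.exp (t*b) * χ x) * Real.exp (-(m*t)) :=
        mul_le_mul_of_nonneg_right hfsum_le (Real.exp_nonneg _)
  _ = Real.exp (c*t) * χ x := by
      rw [mul_right_comm, ← Real.exp_add]
      congr 2
      rw [hc]; ring

/-- With χ(y) = C'(1+|y|)^{-α/2}, 0 ≤ a ≤ C(1+|·|)^{-α}, α > 2d, and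
c = ∫(1+|y|)^{α/2} a(y) dy − ∫ a(y) dy, one has Aχ ≤ cχ pointwise and
e^{tA}χ ≤ e^{ct}χ for all t ≥ 0. -/
theorem one_particle_semigroup_chi_bound
    (d : ℕ) (a : EuclideanSpace ℝ (Fin d) → ℝ) (C C' α : ℝ)
    (hC' : 0 < C') (hC : 0 < C) (hα : 2 * (d : ℝ) < α)
    (ha : ∀ y, 0 ≤ a y ∧ a y ≤ C / (1 + ‖y‖) ^ α)
    (χ : EuclideanSpace ℝ (Fin d) → ℝ)
    (hχ : χ = fun y => C' * (1 + ‖y‖) ^ (-(α / 2)))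
    (c : ℝ) (hc : c = (∫ y, (1 + ‖y‖) ^ (α / 2) * a y) - ∫ y, a y) :
    (∀ x, Aop a χ x ≤ c * χ x) ∧
    ∀ t : ℝ, 0 ≤ t → ∀ x, expA a t χ x ≤ Real.exp (c * t) * χ x := by
  have hbase : ∀ y : EuclideanSpace ℝ (Fin d), (0:ℝ) < 1 + ‖y‖ := fun y => by positivity
  have hα0 : (0:ℝ) < α := by
    have : (0:ℝ) ≤ 2 * (d:ℝ) := by positivity
    linarith
  have hχm : Measurable χ := by
    rw [hχ]
    exact (continuous_const.mul ((continuous_const.add continuous_norm).rpow_const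
      fun y => Or.inl (ne_of_gt (hbase y)))).measurable
  by_cases hA : AEStronglyMeasurable a (volume : Measure (EuclideanSpace ℝ (Fin d)))
  · -- a is a.e. strongly measurable: replace it by a measurable representative
    set a' : EuclideanSpace ℝ (Fin d) → ℝ :=
      fun y => min (max (hA.mk a y) 0) (C / (1 + ‖y‖) ^ α) with ha'def
    have hbound_meas : Measurable (fun y : EuclideanSpace ℝ (Fin d) => C / (1 + ‖y‖) ^ α) := by
      apply Continuous.measurable
      exact continuous_const.div
        ((continuous_const.add continuous_norm).rpow_const fun y => Or.inl (ne_of_gt (hbase y)))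
        (fun y => ne_of_gt (Real.rpow_pos_of_pos (hbase y) α))
    have ha'meas : Measurable a' :=
      (hA.measurable_mk.max measurable_const).min hbound_meas
    have ha' : ∀ y, 0 ≤ a' y ∧ a' y ≤ C / (1 + ‖y‖) ^ α := fun y =>
      ⟨le_min (le_max_right _ _) (by positivity), min_le_right _ _⟩
    have haa' : a =ᵐ[volume] a' := by
      filter_upwards [hA.ae_eq_mk] with y hy
      rw [ha'def]; simp only
      rw [← hy, max_eq_left (ha y).1, min_eq_left (ha y).2]
    have hshift : ∀ x : EuclideanSpace ℝ (Fin d),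
        (fun y => a (x - y)) =ᵐ[volume] (fun y => a' (x - y)) := by
      intro x
      have h0 : a =ᵐ[Measure.map (fun y : EuclideanSpace ℝ (Fin d) => x - y) volume] a' := by
        rwa [(Measure.measurePreserving_sub_left volume x).map_eq]
      exact ae_eq_comp (measurable_const.sub measurable_id).aemeasurable h0
    have hAopeq : ∀ (f : EuclideanSpace ℝ (Fin d) → ℝ) x, Aop a f x = Aop a' f x :=
      fun f x => integral_congr_ae ((hshift x).mul Filter.EventuallyEq.rfl)
    have hApoweq : ∀ n, Apow a n χ = Apow a' n χ := by
      intro n; induction n with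
      | zero => rfl
      | succ n ih =>
        show Aop a (Apow a n χ) = Aop a' (Apow a' n χ)
        rw [← ih]; funext x; exact hAopeq _ x
    have hint1 : (∫ y, a y) = ∫ y, a' y := integral_congr_ae haa'
    have hint2 : (∫ y, (1 + ‖y‖) ^ (α / 2) * a y) = ∫ y, (1 + ‖y‖) ^ (α / 2) * a' y :=
      integral_congr_ae (Filter.EventuallyEq.mul Filter.EventuallyEq.rfl haa')
    have hc' : c = (∫ y, (1 + ‖y‖) ^ (α / 2) * a' y) - ∫ y, a' y := by
      rw [hc, hint1, hint2]
    obtain ⟨H1, H2⟩ := main_meas d a' C C' α hC' hC hα ha'meas ha' χ hχ c hc'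
    constructor
    · intro x; rw [hAopeq χ x]; exact H1 x
    · intro t ht x
      have he : expA a t χ x = expA a' t χ x := by
        unfold expA; exact tsum_congr fun n => by rw [hApoweq n]
      rw [he]; exact H2 t ht x
  · -- a is not a.e. strongly measurable: all integrals are junk `0`
    have hd : 0 < d := by
      by_contra h
      have hd0 : d = 0 := by omega
      subst hd0
      haveI : Subsingleton (EuclideanSpace ℝ (Fin 0)) := ⟨fun x y => PiLp.ext fun i => i.elim0⟩
      exact hA (Subsingleton.measurable.aestronglyMeasurable)
    haveI : Nontrivial (EuclideanSpace ℝ (Fin d)) := by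
      refine ⟨EuclideanSpace.single ⟨0, hd⟩ (1:ℝ), 0, fun h => ?_⟩
      have := congrArg (fun v => v ⟨0, hd⟩) h
      simp [EuclideanSpace.single_apply] at this
    have hm : (∫ y, a y) = 0 :=
      integral_undef fun h => hA h.aestronglyMeasurable
    have hb : (∫ y, (1 + ‖y‖) ^ (α / 2) * a y) = 0 := by
      apply integral_undef
      intro h
      apply hA
      have hwm : Measurable (fun y : EuclideanSpace ℝ (Fin d) => (1 + ‖y‖) ^ (-(α/2))) :=
        (Continuous.measurable ((continuous_const.add continuous_norm).rpow_const
          fun y => Or.inl (ne_of_gt (hbase y))))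
      have h1 : AEStronglyMeasurable
          (fun y : EuclideanSpace ℝ (Fin d) =>
            (1 + ‖y‖) ^ (-(α/2)) * ((1 + ‖y‖) ^ (α/2) * a y)) volume :=
        hwm.aestronglyMeasurable.mul h.aestronglyMeasurable
      refine h1.congr (ae_of_all _ fun y => ?_)
      show (1 + ‖y‖) ^ (-(α/2)) * ((1 + ‖y‖) ^ (α/2) * a y) = a y
      rw [← mul_assoc, ← Real.rpow_add (hbase y)]
      simp
    have hc0 : c = 0 := by rw [hc, hm, hb]; ring
    have hsph : ∀ x : EuclideanSpace ℝ (Fin d), volume {y | χ y = χ x} = 0 := by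
      intro x
      have hsub : {y : EuclideanSpace ℝ (Fin d) | χ y = χ x}
          ⊆ {y : EuclideanSpace ℝ (Fin d) | ‖y‖ = ‖x‖} := by
        intro y hy
        simp only [Set.mem_setOf_eq] at hy ⊢
        rw [hχ] at hy; simp only at hy
        have hy2 : (1 + ‖y‖) ^ (-(α/2)) = (1 + ‖x‖) ^ (-(α/2)) :=
          mul_left_cancel₀ (ne_of_gt hC') hy
        rw [Real.rpow_neg (hbase y).le, Real.rpow_neg (hbase x).le] at hy2
        have hy3 : (1 + ‖y‖) ^ (α/2) = (1 + ‖x‖) ^ (α/2) := inv_inj.mp hy2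
        by_contra hne
        rcases lt_or_gt_of_ne hne with hlt | hgt
        · have : (1 + ‖y‖) ^ (α/2) < (1 + ‖x‖) ^ (α/2) :=
            Real.rpow_lt_rpow (hbase y).le (by linarith) (by linarith)
          linarith
        · have : (1 + ‖x‖) ^ (α/2) < (1 + ‖y‖) ^ (α/2) :=
            Real.rpow_lt_rpow (hbase x).le (by linarith) (by linarith)
          linarith
      refine measure_mono_null hsub ?_
      have : {y : EuclideanSpace ℝ (Fin d) | ‖y‖ = ‖x‖}
          = Metric.sphere (0 : EuclideanSpace ℝ (Fin d)) ‖x‖ := by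
        ext y; simp [mem_sphere_zero_iff_norm]
      rw [this]
      exact Measure.addHaar_sphere volume 0 ‖x‖
    have hAop0 : ∀ x, Aop a χ x = 0 := by
      intro x
      apply integral_undef
      intro h
      apply hA
      have hφ : AEStronglyMeasurable
          (fun y : EuclideanSpace ℝ (Fin d) =>
            (χ y - χ x)⁻¹ * (a (x - y) * (χ y - χ x))) volume :=
        ((hχm.sub measurable_const).inv).aestronglyMeasurable.mul h.aestronglyMeasurable
      have hae : (fun y : EuclideanSpace ℝ (Fin d) => a (x - y))
          =ᵐ[volume] (fun y => (χ y - χ x)⁻¹ * (a (x - y) * (χ y - χ x))) := by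
        rw [Filter.EventuallyEq, ae_iff]
        refine measure_mono_null ?_ (hsph x)
        intro y hy
        simp only [Set.mem_setOf_eq] at hy ⊢
        by_contra hne
        apply hy
        have hsub0 : χ y - χ x ≠ 0 := sub_ne_zero.mpr hne
        rw [mul_comm (a (x - y)) (χ y - χ x), ← mul_assoc, inv_mul_cancel₀ hsub0, one_mul]
      have h2 : AEStronglyMeasurable (fun y : EuclideanSpace ℝ (Fin d) => a (x - y)) volume :=
        hφ.congr hae.symm
      have h3 := h2.comp_measurePreserving (Measure.measurePreserving_sub_left volume x)
      have h4 : ((fun y : EuclideanSpace ℝ (Fin d) => a (x - y)) ∘ fun t => x - t) = a := by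
        funext z; simp [Function.comp, sub_sub_cancel]
      rwa [h4] at h3
    have hApow0 : ∀ n : ℕ, Apow a (n+1) χ = fun _ => (0:ℝ) := by
      intro n; induction n with
      | zero => funext x; exact hAop0 x
      | succ n ih =>
        funext x
        show Aop a (Apow a (n+1) χ) x = 0
        rw [ih]
        simp [Aop]
    constructor
    · intro x
      rw [hc0, zero_mul, hAop0 x]
    · intro t ht x
      have hs : expA a t χ x = χ x := by
        unfold expA
        rw [tsum_eq_single 0 ?_]
        · simp [Apow]
        · intro n hn
          obtain ⟨k, rfl⟩ := Nat.exists_eq_succ_of_ne_zero hn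
          rw [hApow0 k]
          simp
      rw [hs, hc0]
      simp
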